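/- arXiv:2008.01915 — 2 statements merged into one kernel-verified Lean document; each statement's English description precedes it below -/
import Mathlib

section
/- Fix p ≥ 1 and a constant C. Let P_n^{YZ} (n ∈ ℕ) and P^{YZ} be probability measures on D_y × D_z, where D_y ⊂ ℝ^{d_y} and D_z ⊂ ℝ^{d_z} are compact, with marginals P_n^Y, P^Y on D_y and disintegration kernels P_n^{Z|Y=y}, P^{Z|Y=y}. Suppose P_n^{YZ} converges weakly to P^{YZ} and the map y ↦ P^{Z|Y=y} is C-Lipschitz in the Wasserstein-p metric. Then for every bounded Lipschitz function g : ℝ^{d_y} × ℝ^{d_z} → ℝ, the difference ∬ g(y,z) dP_n^{Z|Y=y}(z) dP_n^Y(y) − ∬ g(y,z) dP^{Z|Y=y}(z) dP_n^Y(y) converges to 0 as n → ∞. -/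
open MeasureTheory Filter Topology ENNReal

/-- `π` is a coupling of `μ` and `ν`: a measure on the product whose marginals are `μ`, `ν`. -/
def IsCoupling {α β : Type*} [MeasurableSpace α] [MeasurableSpace β]
    (π : Measure (α × β)) (μ : Measure α) (ν : Measure β) : Prop :=
  π.map Prod.fst = μ ∧ π.map Prod.snd = ν

/-- The Wasserstein-`p` distance between two measures on a measurable space equipped with a
distance function `d`: the infimum over all couplings `π` of `(∫ d(x,y)^p dπ)^{1/p}`. -/
noncomputable def wassersteinDist {α : Type*} [MeasurableSpace α]
    (d : α → α → ℝ) (p : ℝ) (μ ν : Measure α) : ℝ≥0∞ :=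
  ⨅ (π : Measure (α × α)) (_ : IsProbabilityMeasure π) (_ : IsCoupling π μ ν),
    (∫⁻ z, ENNReal.ofReal (d z.1 z.2 ^ p) ∂π) ^ (1 / p)

/-- Weak convergence of a sequence of measures: integrals of every bounded continuous
real-valued function converge. -/
def WeakTendsto {α : Type*} [MeasurableSpace α] [TopologicalSpace α]
    (μs : ℕ → Measure α) (μ : Measure α) : Prop :=
  ∀ f : BoundedContinuousFunction α ℝ,
    Tendsto (fun n => ∫ x, f x ∂(μs n)) atTop (𝓝 (∫ x, f x ∂μ))

/-- `κ` is a disintegration kernel of the measure `P` on `α × β` along the first coordinate: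
a measurable family of probability measures on `β` with
`P(A × B) = ∫_A κ(y)(B) d(P.map fst)(y)`. -/
def IsDisintegrationFst {α β : Type*} [MeasurableSpace α] [MeasurableSpace β]
    (P : Measure (α × β)) (κ : α → Measure β) : Prop :=
  (∀ y, IsProbabilityMeasure (κ y)) ∧
  (∀ B : Set β, MeasurableSet B → Measurable fun y => κ y B) ∧
  ∀ A B, MeasurableSet A → MeasurableSet B →
    P (A ×ˢ B) = ∫⁻ y in A, κ y B ∂(P.map Prod.fst)

open ProbabilityTheory

lemma disint_integral' {α β : Type*} [MeasurableSpace α] [MeasurableSpace β]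
    (P : Measure (α × β)) [IsProbabilityMeasure P]
    (κ : α → Measure β) (h : IsDisintegrationFst P κ)
    (f : α × β → ℝ) (hf : Integrable f P) :
    ∫ x, f x ∂P = ∫ y, ∫ z, f (y, z) ∂(κ y) ∂(P.map Prod.fst) := by
  set η : ProbabilityTheory.Kernel α β :=
    ⟨κ, Measure.measurable_of_measurable_coe κ h.2.1⟩ with hη
  haveI : ProbabilityTheory.IsMarkovKernel η := ⟨fun a => h.1 a⟩
  haveI : IsProbabilityMeasure (P.map Prod.fst) :=
    Measure.isProbabilityMeasure_map measurable_fst.aemeasurable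
  have hPe : P = (P.map Prod.fst) ⊗ₘ η := by
    refine MeasureTheory.ext_of_generate_finite _ generateFrom_prod.symm isPiSystem_prod ?_ ?_
    · rintro _ ⟨A, hA, B, hB, rfl⟩
      rw [Measure.compProd_apply_prod hA hB, h.2.2 A B hA hB]; rfl
    · simp [measure_univ]
  have hf' : Integrable f ((P.map Prod.fst) ⊗ₘ η) := hPe ▸ hf
  calc ∫ x, f x ∂P = ∫ x, f x ∂((P.map Prod.fst) ⊗ₘ η) := by rw [← hPe]
    _ = ∫ y, ∫ z, f (y, z) ∂(η y) ∂(P.map Prod.fst) := Measure.integral_compProd hf'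
    _ = ∫ y, ∫ z, f (y, z) ∂(κ y) ∂(P.map Prod.fst) := rfl

lemma key_T1' {E : Type*} [MeasurableSpace E] [MetricSpace E] [OpensMeasurableSpace E]
    [SecondCountableTopology E]
    (p : ℝ) (hp : 1 ≤ p) (μ ν : Measure E)
    (φ : E → ℝ) (hφc : Continuous φ) (M : ℝ) (hM : ∀ z, |φ z| ≤ M)
    (L : ℝ) (hL : 0 ≤ L) (hφl : ∀ z z', |φ z - φ z'| ≤ L * dist z z')
    (b : ℝ) (hb : 0 ≤ b)
    (hW : wassersteinDist (fun a b => dist a b) p μ ν ≤ ENNReal.ofReal b) :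
    |∫ z, φ z ∂μ - ∫ z, φ z ∂ν| ≤ L * b := by
  refine le_of_forall_pos_le_add fun ε hε => ?_
  set δ : ℝ := ε / (L + 1) with hδ
  have hδ0 : 0 < δ := div_pos hε (by linarith)
  have h1 : wassersteinDist (fun a b => dist a b) p μ ν < ENNReal.ofReal (b + δ) := by
    refine lt_of_le_of_lt hW ?_
    exact (ENNReal.ofReal_lt_ofReal_iff (by linarith)).mpr (by linarith)
  rw [wassersteinDist, iInf_lt_iff] at h1
  obtain ⟨π, h1⟩ := h1
  rw [iInf_lt_iff] at h1
  obtain ⟨hπp, h1⟩ := h1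
  rw [iInf_lt_iff] at h1
  obtain ⟨hπc, hcost⟩ := h1
  haveI := hπp
  have hm1 : ∫ z, φ z ∂μ = ∫ a, φ a.1 ∂π := by
    rw [← hπc.1, integral_map measurable_fst.aemeasurable hφc.aestronglyMeasurable]
  have hm2 : ∫ z, φ z ∂ν = ∫ a, φ a.2 ∂π := by
    rw [← hπc.2, integral_map measurable_snd.aemeasurable hφc.aestronglyMeasurable]
  have hint1 : Integrable (fun a : E × E => φ a.1) π :=
    (integrable_const M).mono' (hφc.comp continuous_fst).aestronglyMeasurable
      (ae_of_all _ fun a => by simpa using hM a.1)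
  have hint2 : Integrable (fun a : E × E => φ a.2) π :=
    (integrable_const M).mono' (hφc.comp continuous_snd).aestronglyMeasurable
      (ae_of_all _ fun a => by simpa using hM a.2)
  rw [hm1, hm2, ← integral_sub hint1 hint2]
  have habs : |∫ a, (φ a.1 - φ a.2) ∂π| ≤ ∫ a, |φ a.1 - φ a.2| ∂π :=
    by simpa using norm_integral_le_integral_norm (μ := π) fun a : E × E => φ a.1 - φ a.2
  have hcΔ : Continuous fun a : E × E => |φ a.1 - φ a.2| :=
    ((hφc.comp continuous_fst).sub (hφc.comp continuous_snd)).abs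
  have heq : ∫ a, |φ a.1 - φ a.2| ∂π
      = (∫⁻ a, ENNReal.ofReal (|φ a.1 - φ a.2|) ∂π).toReal := by
    rw [integral_eq_lintegral_of_nonneg_ae (ae_of_all _ fun a => abs_nonneg _)
      hcΔ.aestronglyMeasurable]
  set f : E × E → ℝ := fun a => dist a.1 a.2 with hf
  have hfc : Continuous f := continuous_dist.comp (continuous_fst.prodMk continuous_snd)
  have e1 : eLpNorm f 1 π = ∫⁻ a, ENNReal.ofReal (f a) ∂π := by
    rw [eLpNorm_one_eq_lintegral_enorm]
    congr 1; ext a; exact Real.enorm_eq_ofReal dist_nonneg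
  have hp0 : (ENNReal.ofReal p) ≠ 0 := by
    simp [ENNReal.ofReal_eq_zero]; linarith
  have e2 : eLpNorm f (ENNReal.ofReal p) π = (∫⁻ a, ENNReal.ofReal (f a ^ p) ∂π) ^ (1 / p) := by
    rw [eLpNorm_eq_lintegral_rpow_enorm_toReal hp0 ENNReal.ofReal_ne_top]
    rw [ENNReal.toReal_ofReal (by linarith)]
    congr 1
    refine lintegral_congr fun a => ?_
    rw [Real.enorm_eq_ofReal dist_nonneg,
      ENNReal.ofReal_rpow_of_nonneg dist_nonneg (by linarith)]
  have e3 : eLpNorm f 1 π ≤ eLpNorm f (ENNReal.ofReal p) π :=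
    eLpNorm_le_eLpNorm_of_exponent_le (by simpa using ENNReal.one_le_ofReal.mpr hp)
      hfc.aestronglyMeasurable
  have hdistle : ∫⁻ a, ENNReal.ofReal (f a) ∂π ≤ ENNReal.ofReal (b + δ) := by
    rw [← e1]
    exact le_trans (e3.trans_eq e2) hcost.le
  have hlint : ∫⁻ a, ENNReal.ofReal (|φ a.1 - φ a.2|) ∂π ≤ ENNReal.ofReal (L * (b + δ)) := by
    calc ∫⁻ a, ENNReal.ofReal (|φ a.1 - φ a.2|) ∂π
        ≤ ∫⁻ a, ENNReal.ofReal L * ENNReal.ofReal (f a) ∂π := by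
          refine lintegral_mono fun a => ?_
          rw [← ENNReal.ofReal_mul hL]
          exact ENNReal.ofReal_le_ofReal (hφl a.1 a.2)
      _ = ENNReal.ofReal L * ∫⁻ a, ENNReal.ofReal (f a) ∂π :=
          lintegral_const_mul' _ _ ENNReal.ofReal_ne_top
      _ ≤ ENNReal.ofReal L * ENNReal.ofReal (b + δ) :=
          mul_le_mul_right hdistle _
      _ = ENNReal.ofReal (L * (b + δ)) := (ENNReal.ofReal_mul hL).symm
  have hfin : ∫ a, |φ a.1 - φ a.2| ∂π ≤ L * (b + δ) := by
    rw [heq]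
    exact ENNReal.toReal_le_of_le_ofReal (by positivity) hlint
  refine le_trans habs (le_trans hfin ?_)
  have hLd : L * δ ≤ ε := by
    have h2 : L / (L + 1) ≤ 1 := by
      rw [div_le_one (by linarith)]; linarith
    calc L * δ = (L / (L + 1)) * ε := by rw [hδ]; ring
      _ ≤ 1 * ε := mul_le_mul_of_nonneg_right h2 hε.le
      _ = ε := one_mul ε
  nlinarith


/-- **Lemma 3.** Fix `p ≥ 1` and a constant `C`. Let `Pₙ^{YZ}` and `P^{YZ}` be probability
measures on `D_y × D_z` (compact subsets of Euclidean spaces), with marginals `Pₙ^Y`, `P^Y` and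
disintegration kernels `Pₙ^{Z|Y=y}`, `P^{Z|Y=y}`. If `Pₙ^{YZ}` converges weakly to `P^{YZ}` and
`y ↦ P^{Z|Y=y}` is `C`-Lipschitz in the Wasserstein-`p` metric, then for every bounded
Lipschitz `g`, the difference
`∬ g dPₙ^{Z|Y=y} dPₙ^Y − ∬ g dP^{Z|Y=y} dPₙ^Y` converges to `0`. -/
theorem stmt_3 (dy dz : ℕ) (p C : ℝ) (hp : 1 ≤ p)
    (Dy : Set (EuclideanSpace ℝ (Fin dy))) (Dz : Set (EuclideanSpace ℝ (Fin dz)))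
    (hDy : IsCompact Dy) (hDz : IsCompact Dz)
    (Pn : ℕ → Measure (EuclideanSpace ℝ (Fin dy) × EuclideanSpace ℝ (Fin dz)))
    (P : Measure (EuclideanSpace ℝ (Fin dy) × EuclideanSpace ℝ (Fin dz)))
    (hPn : ∀ n, IsProbabilityMeasure (Pn n)) (hP : IsProbabilityMeasure P)
    (hPnsupp : ∀ n, Pn n (Dy ×ˢ Dz) = 1) (hPsupp : P (Dy ×ˢ Dz) = 1)
    (κn : ℕ → EuclideanSpace ℝ (Fin dy) → Measure (EuclideanSpace ℝ (Fin dz)))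
    (κ : EuclideanSpace ℝ (Fin dy) → Measure (EuclideanSpace ℝ (Fin dz)))
    (hκn : ∀ n, IsDisintegrationFst (Pn n) (κn n))
    (hκ : IsDisintegrationFst P κ)
    (hweak : WeakTendsto Pn P)
    (hκlip : ∀ y y', wassersteinDist (fun a b => dist a b) p (κ y) (κ y')
      ≤ ENNReal.ofReal (C * ‖y - y'‖))
    (g : EuclideanSpace ℝ (Fin dy) → EuclideanSpace ℝ (Fin dz) → ℝ)
    (hgbdd : ∃ M, ∀ y z, |g y z| ≤ M)
    (hglip : ∃ L, ∀ y z y' z', |g y z - g y' z'| ≤ L * (‖y - y'‖ + ‖z - z'‖)) :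
    Tendsto (fun n =>
        (∫ y, ∫ z, g y z ∂(κn n y) ∂((Pn n).map Prod.fst))
          - ∫ y, ∫ z, g y z ∂(κ y) ∂((Pn n).map Prod.fst))
      atTop (𝓝 0) := by
  obtain ⟨M, hM⟩ := hgbdd
  obtain ⟨L, hL⟩ := hglip
  have hM0 : 0 ≤ M := le_trans (abs_nonneg _) (hM 0 0)
  set L' : ℝ := max L 0 with hL'def
  have hL'0 : 0 ≤ L' := le_max_right _ _
  have hL' : ∀ y z y' z', |g y z - g y' z'| ≤ L' * (‖y - y'‖ + ‖z - z'‖) := fun y z y' z' =>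
    le_trans (hL y z y' z') (mul_le_mul_of_nonneg_right (le_max_left _ _)
      (by positivity))
  set C' : ℝ := max C 0 with hC'def
  have hC'0 : 0 ≤ C' := le_max_right _ _
  -- continuity of g (jointly)
  have hgcont : Continuous fun x : EuclideanSpace ℝ (Fin dy) × EuclideanSpace ℝ (Fin dz) =>
      g x.1 x.2 := by
    refine (LipschitzWith.of_dist_le_mul (K := (2 * L').toNNReal) fun x x' => ?_).continuous
    rw [Real.dist_eq, Real.coe_toNNReal _ (by positivity)]
    refine le_trans (hL' x.1 x.2 x'.1 x'.2) ?_
    have h1 : ‖x.1 - x'.1‖ ≤ dist x x' := by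
      rw [← dist_eq_norm]; rw [Prod.dist_eq]; exact le_max_left _ _
    have h2 : ‖x.2 - x'.2‖ ≤ dist x x' := by
      rw [← dist_eq_norm]; rw [Prod.dist_eq]; exact le_max_right _ _
    nlinarith [dist_nonneg (x := x) (y := x')]
  have hgy : ∀ y, Continuous (g y) := fun y => by
    have := hgcont.comp (Continuous.prodMk_right y)
    exact this
  -- the function F
  set F : EuclideanSpace ℝ (Fin dy) → ℝ := fun y => ∫ z, g y z ∂(κ y) with hFdef
  have hFb : ∀ y, |F y| ≤ M := by
    intro y
    haveI := hκ.1 y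
    have := norm_integral_le_of_norm_le_const (μ := κ y) (f := g y) (C := M)
      (ae_of_all _ fun z => by simpa using hM y z)
    simpa [measure_univ] using this
  have hFlip : ∀ y y', |F y - F y'| ≤ (L' * C' + L') * ‖y - y'‖ := by
    intro y y'
    haveI := hκ.1 y
    haveI := hκ.1 y'
    have hT1 : |(∫ z, g y z ∂(κ y)) - ∫ z, g y z ∂(κ y')| ≤ L' * (C' * ‖y - y'‖) := by
      refine key_T1' p hp (κ y) (κ y') (g y) (hgy y) M (hM y) L' hL'0
        (fun z z' => by simpa [dist_eq_norm] using hL' y z y z') (C' * ‖y - y'‖)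
        (by positivity) ?_
      refine le_trans (hκlip y y') (ENNReal.ofReal_le_ofReal ?_)
      exact mul_le_mul_of_nonneg_right (le_max_left _ _) (norm_nonneg _)
    have hT2 : |(∫ z, g y z ∂(κ y')) - ∫ z, g y' z ∂(κ y')| ≤ L' * ‖y - y'‖ := by
      have hi1 : Integrable (g y) (κ y') :=
        (integrable_const M).mono' (hgy y).aestronglyMeasurable
          (ae_of_all _ fun z => by simpa using hM y z)
      have hi2 : Integrable (g y') (κ y') :=
        (integrable_const M).mono' (hgy y').aestronglyMeasurable
          (ae_of_all _ fun z => by simpa using hM y' z)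
      rw [← integral_sub hi1 hi2]
      have := norm_integral_le_of_norm_le_const (μ := κ y')
        (f := fun z => g y z - g y' z) (C := L' * ‖y - y'‖)
        (ae_of_all _ fun z => by
          simpa using le_trans (hL' y z y' z) (by simp))
      simpa [measure_univ] using this
    calc |F y - F y'| ≤ |(∫ z, g y z ∂(κ y)) - ∫ z, g y z ∂(κ y')|
          + |(∫ z, g y z ∂(κ y')) - ∫ z, g y' z ∂(κ y')| := abs_sub_le _ _ _
      _ ≤ L' * (C' * ‖y - y'‖) + L' * ‖y - y'‖ := add_le_add hT1 hT2
      _ = (L' * C' + L') * ‖y - y'‖ := by ring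
  have hFcont : Continuous F := by
    refine (LipschitzWith.of_dist_le_mul (K := (L' * C' + L').toNNReal) fun y y' => ?_).continuous
    rw [Real.dist_eq, Real.coe_toNNReal _ (by positivity), dist_eq_norm]
    exact hFlip y y'
  -- bounded continuous functions
  set Gbcf : BoundedContinuousFunction
      (EuclideanSpace ℝ (Fin dy) × EuclideanSpace ℝ (Fin dz)) ℝ :=
    BoundedContinuousFunction.ofNormedAddCommGroup _ hgcont M
      (fun x => by simpa using hM x.1 x.2) with hGbcf
  set Fbcf : BoundedContinuousFunction (EuclideanSpace ℝ (Fin dy)) ℝ :=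
    BoundedContinuousFunction.ofNormedAddCommGroup F hFcont M
      (fun y => by simpa using hFb y) with hFbcf
  set Hbcf : BoundedContinuousFunction
      (EuclideanSpace ℝ (Fin dy) × EuclideanSpace ℝ (Fin dz)) ℝ :=
    Fbcf.compContinuous ⟨Prod.fst, continuous_fst⟩ with hHbcf
  have hGcoe : ∀ x, Gbcf x = g x.1 x.2 := fun x => rfl
  have hHcoe : ∀ x, Hbcf x = F x.1 := fun x => rfl
  -- integrability of G against any probability measure
  have hGint : ∀ (Q : Measure (EuclideanSpace ℝ (Fin dy) × EuclideanSpace ℝ (Fin dz))),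
      IsProbabilityMeasure Q → Integrable (fun x => g x.1 x.2) Q := by
    intro Q hQ
    haveI := hQ
    exact (integrable_const M).mono' hgcont.aestronglyMeasurable
      (ae_of_all _ fun x => by simpa using hM x.1 x.2)
  -- key identities
  have key1 : ∀ n, ∫ y, ∫ z, g y z ∂(κn n y) ∂((Pn n).map Prod.fst)
      = ∫ x, Gbcf x ∂(Pn n) := by
    intro n
    haveI := hPn n
    exact (disint_integral' (Pn n) (κn n) (hκn n) _ (hGint _ (hPn n))).symm
  have key2 : ∫ y, F y ∂(P.map Prod.fst) = ∫ x, Gbcf x ∂P :=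
    (disint_integral' P κ hκ _ (hGint _ hP)).symm
  have keyH : ∀ (Q : Measure (EuclideanSpace ℝ (Fin dy) × EuclideanSpace ℝ (Fin dz))),
      ∫ x, Hbcf x ∂Q = ∫ y, F y ∂(Q.map Prod.fst) := by
    intro Q
    rw [integral_map measurable_fst.aemeasurable hFcont.aestronglyMeasurable]
    rfl
  have t1 := hweak Gbcf
  have t2 := hweak Hbcf
  rw [keyH P, key2] at t2
  have t3 := t1.sub t2
  rw [sub_self] at t3
  refine t3.congr fun n => ?_
  rw [key1 n, keyH (Pn n)]
end

section
/- For every p ≥ 1 there exist probability measures P_n (n ∈ ℕ) and P on the compact set [0,1]³ ⊂ ℝ³, each of which is the law of a Markov chain of length 3 (the first and third coordinates are conditionally independent given the second), such that the (1,2)-marginals of P_n converge to the (1,2)-marginal of P in the Wasserstein-p metric and the (2,3)-marginals of P_n converge to the (2,3)-marginal of P in the Wasserstein-p metric, yet P_n does not converge to P in the Wasserstein-p metric. (One can take P_n = (1/2)δ_{(0,0,0)} + (1/2)δ_{(1,1/n,1)} and P = (1/4)(δ_{(0,0,0)} + δ_{(0,0,1)} + δ_{(1,0,0)} + δ_{(1,0,1)}).)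 -/
open MeasureTheory Filter Topology ENNReal

/-- The `l_q` distance on `ℝ²`. -/
noncomputable def lqDist2 (q : ℝ) (a b : ℝ × ℝ) : ℝ :=
  (|a.1 - b.1| ^ q + |a.2 - b.2| ^ q) ^ (1 / q)

/-- The `l_q` distance on `ℝ³`. -/
noncomputable def lqDist3 (q : ℝ) (a b : ℝ × ℝ × ℝ) : ℝ :=
  (|a.1 - b.1| ^ q + |a.2.1 - b.2.1| ^ q + |a.2.2 - b.2.2| ^ q) ^ (1 / q)

/-- Under `μ`, the σ-algebras `mA` and `mB` are conditionally independent given the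
σ-algebra `m`: for all `A ∈ mA` and `B ∈ mB`, the conditional expectation of `1_{A∩B}`
given `m` agrees `μ`-a.e. with the product of those of `1_A` and `1_B`. -/
def CondIndepSetsGiven {Ω : Type*} [MeasurableSpace Ω] (μ : Measure Ω)
    (m mA mB : MeasurableSpace Ω) : Prop :=
  ∀ A B : Set Ω, MeasurableSet[mA] A → MeasurableSet[mB] B →
    (MeasureTheory.condExp m μ ((A ∩ B).indicator fun _ => (1 : ℝ))) =ᵐ[μ]
      fun ω => (MeasureTheory.condExp m μ (A.indicator fun _ => (1 : ℝ)) ω)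
        * (MeasureTheory.condExp m μ (B.indicator fun _ => (1 : ℝ)) ω)

/-- A probability measure on `ℝ³` is the law of a Markov chain of length 3: the first and
third coordinates are conditionally independent given the second. -/
def IsMarkovLaw3 (μ : Measure (ℝ × ℝ × ℝ)) : Prop :=
  CondIndepSetsGiven μ
    (MeasurableSpace.comap (fun w => w.2.1) inferInstance)
    (MeasurableSpace.comap (fun w => w.1) inferInstance)
    (MeasurableSpace.comap (fun w => w.2.2) inferInstance)

lemma condexp_self_aux {Ω : Type*} {m m0 : MeasurableSpace Ω}
    (hm : m ≤ m0) (μ : @Measure Ω m0) [IsProbabilityMeasure μ]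
    {f g : Ω → ℝ} (hf : Integrable f μ) (hg : StronglyMeasurable[m] g) (hfg : f =ᵐ[μ] g) :
    condExp m μ f =ᵐ[μ] f := by
  have h1 : condExp m μ f =ᵐ[μ] condExp m μ g := condExp_congr_ae hfg
  rw [condExp_of_stronglyMeasurable hm hg (hf.congr hfg)] at h1
  exact h1.trans hfg.symm

lemma condexp_triv_aux {Ω γ : Type*} {m0 : MeasurableSpace Ω} [MeasurableSpace γ]
    (μ : Measure Ω) [IsProbabilityMeasure μ] {h : Ω → γ} (hmeas : Measurable h) (c : γ)
    (hc : ∀ᵐ ω ∂μ, h ω = c) {f : Ω → ℝ} (hf : Integrable f μ) :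
    condExp (MeasurableSpace.comap h inferInstance) μ f =ᵐ[μ] fun _ => ∫ x, f x ∂μ := by
  refine (ae_eq_condExp_of_forall_setIntegral_eq hmeas.comap_le hf
    (fun s _ _ => (integrable_const _).integrableOn) ?_ ?_).symm
  · rintro s ⟨S, hS, rfl⟩ _
    by_cases hcS : c ∈ S
    · have hres : μ.restrict (h ⁻¹' S) = μ :=
        Measure.restrict_eq_self_of_ae_mem
          (by filter_upwards [hc] with ω hω; simp [Set.mem_preimage, hω, hcS])
      rw [hres]
      simp
    · have hnull : μ (h ⁻¹' S) = 0 := by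
        refine measure_mono_null ?_ (ae_iff.mp hc : μ {ω | ¬ h ω = c} = 0)
        intro ω hω hωc
        exact hcS (by simpa [Set.mem_preimage, hωc] using hω)
      rw [Measure.restrict_eq_zero.mpr hnull]
      simp
  · exact ⟨_, stronglyMeasurable_const, Filter.EventuallyEq.rfl⟩

lemma condIndep_of_ae {Ω : Type*} (m mA mB : MeasurableSpace Ω) {m0 : MeasurableSpace Ω}
    (μ : Measure Ω) [IsProbabilityMeasure μ]
    (hm : m ≤ m0) (hmA : mA ≤ m0) (hmB : mB ≤ m0)
    (H : ∀ C : Set Ω, (MeasurableSet[mA] C ∨ MeasurableSet[mB] C) →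
      ∃ g, StronglyMeasurable[m] g ∧ (C.indicator (fun _ => (1:ℝ))) =ᵐ[μ] g) :
    @CondIndepSetsGiven Ω m0 μ m mA mB := by
  intro A B hA hB
  obtain ⟨gA, hgA, hA'⟩ := H A (Or.inl hA)
  obtain ⟨gB, hgB, hB'⟩ := H B (Or.inr hB)
  have intA : Integrable (A.indicator fun _ => (1:ℝ)) μ :=
    (integrable_const 1).indicator (hmA _ hA)
  have intB : Integrable (B.indicator fun _ => (1:ℝ)) μ :=
    (integrable_const 1).indicator (hmB _ hB)
  have intAB : Integrable ((A ∩ B).indicator fun _ => (1:ℝ)) μ :=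
    (integrable_const 1).indicator ((hmA _ hA).inter (hmB _ hB))
  have hABind : ((A ∩ B).indicator fun _ => (1:ℝ)) =
      fun ω => (A.indicator (fun _ => (1:ℝ)) ω) * (B.indicator (fun _ => (1:ℝ)) ω) := by
    funext ω
    by_cases hωA : ω ∈ A <;> by_cases hωB : ω ∈ B <;>
      simp [Set.indicator_apply, hωA, hωB, Set.mem_inter_iff]
  have eAB : ((A ∩ B).indicator fun _ => (1:ℝ)) =ᵐ[μ] fun ω => gA ω * gB ω := by
    rw [hABind]; exact hA'.mul hB'
  have h1 := condexp_self_aux hm μ intAB (hgA.mul hgB) eAB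
  have h2 := condexp_self_aux hm μ intA hgA hA'
  have h3 := condexp_self_aux hm μ intB hgB hB'
  filter_upwards [h1, h2, h3] with ω e1 e2 e3
  rw [e1, e2, e3, hABind]

noncomputable def PP : Measure (ℝ × ℝ × ℝ) :=
  (4⁻¹ : ℝ≥0∞) • (Measure.dirac (0,0,0) + Measure.dirac (0,0,1)
    + Measure.dirac (1,0,0) + Measure.dirac (1,0,1))

def pa : ℝ × ℝ × ℝ := (0,0,0)
noncomputable def pb (n : ℕ) : ℝ × ℝ × ℝ := (1, (n+1 : ℝ)⁻¹, 1)

noncomputable def PPn (n : ℕ) : Measure (ℝ × ℝ × ℝ) :=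
  (2⁻¹ : ℝ≥0∞) • Measure.dirac pa + (2⁻¹ : ℝ≥0∞) • Measure.dirac (pb n)

instance : IsProbabilityMeasure PP := by
  constructor
  simp [PP]
  have : (4⁻¹ : ℝ≥0∞) + 4⁻¹ + 4⁻¹ + 4⁻¹ = 4 * 4⁻¹ := by ring
  rw [this]
  exact ENNReal.mul_inv_cancel (by norm_num) (by norm_num)

instance PPn_prob (n : ℕ) : IsProbabilityMeasure (PPn n) := by
  constructor
  simp [PPn]
  rw [← two_mul]
  exact ENNReal.mul_inv_cancel (by norm_num) (by norm_num)

lemma tinv_ne (n : ℕ) : ((n : ℝ) + 1)⁻¹ ≠ 0 := by positivity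

lemma PPn_ae (n : ℕ) : ∀ᵐ w ∂(PPn n), w = pa ∨ w = pb n := by
  rw [ae_iff]
  have : {w : ℝ×ℝ×ℝ | ¬ (w = pa ∨ w = pb n)} = ({pa, pb n} : Set (ℝ×ℝ×ℝ))ᶜ := by
    ext w; simp [not_or]
  rw [this]
  simp [PPn, Measure.dirac_apply]

lemma markov_PPn (n : ℕ) : IsMarkovLaw3 (PPn n) := by
  refine condIndep_of_ae _ _ _ (PPn n)
    (Measurable.comap_le (measurable_fst.comp measurable_snd))
    (Measurable.comap_le measurable_fst)
    (Measurable.comap_le (measurable_snd.comp measurable_snd)) ?_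
  rintro C (⟨S, hS, rfl⟩ | ⟨S, hS, rfl⟩) <;>
  · refine ⟨fun w => if w.2.1 = 0 then S.indicator (fun _ => (1:ℝ)) 0
        else S.indicator (fun _ => (1:ℝ)) 1, ?_, ?_⟩
    · refine Measurable.stronglyMeasurable ?_
      have h21 : @Measurable _ _
          (MeasurableSpace.comap (fun w : ℝ×ℝ×ℝ => w.2.1) inferInstance) _
          (fun w : ℝ×ℝ×ℝ => w.2.1) := Measurable.of_comap_le le_rfl
      have hgm : Measurable (fun y : ℝ => if y = 0 then S.indicator (fun _ => (1:ℝ)) 0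
          else S.indicator (fun _ => (1:ℝ)) 1) :=
        Measurable.ite (by exact measurableSet_eq) measurable_const measurable_const
      exact hgm.comp h21
    · filter_upwards [PPn_ae n] with w hw
      rcases hw with rfl | rfl
      · by_cases h : (0:ℝ) ∈ S <;>
          simp [pa, Set.indicator_apply, Set.mem_preimage, h]
      · by_cases h : (1:ℝ) ∈ S <;>
          simp [pb, Set.indicator_apply, Set.mem_preimage, h, tinv_ne n]

lemma PP_mid : ∀ᵐ w ∂PP, w.2.1 = (0:ℝ) := by
  rw [ae_iff]
  simp [PP, Measure.dirac_apply, Set.indicator_apply]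

lemma markov_PP : IsMarkovLaw3 PP := by
  rintro A B ⟨S, hS, rfl⟩ ⟨T, hT, rfl⟩
  have hAm : MeasurableSet ((fun w : ℝ×ℝ×ℝ => w.1) ⁻¹' S) := measurable_fst hS
  have hBm : MeasurableSet ((fun w : ℝ×ℝ×ℝ => w.2.2) ⁻¹' T) :=
    (measurable_snd.comp measurable_snd) hT
  have intA : Integrable (((fun w : ℝ×ℝ×ℝ => w.1) ⁻¹' S).indicator fun _ => (1:ℝ)) PP :=
    (integrable_const 1).indicator hAm
  have intB : Integrable (((fun w : ℝ×ℝ×ℝ => w.2.2) ⁻¹' T).indicator fun _ => (1:ℝ)) PP :=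
    (integrable_const 1).indicator hBm
  have intAB : Integrable ((((fun w : ℝ×ℝ×ℝ => w.1) ⁻¹' S) ∩
      ((fun w : ℝ×ℝ×ℝ => w.2.2) ⁻¹' T)).indicator fun _ => (1:ℝ)) PP :=
    (integrable_const 1).indicator (hAm.inter hBm)
  have hm21 : Measurable (fun w : ℝ×ℝ×ℝ => w.2.1) := measurable_fst.comp measurable_snd
  have h1 := condexp_triv_aux PP (h := fun w => w.2.1) hm21 0 PP_mid intAB
  have h2 := condexp_triv_aux PP (h := fun w => w.2.1) hm21 0 PP_mid intA
  have h3 := condexp_triv_aux PP (h := fun w => w.2.1) hm21 0 PP_mid intB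
  have e1' : (∫ x, ((((fun w : ℝ×ℝ×ℝ => w.1) ⁻¹' S) ∩ ((fun w : ℝ×ℝ×ℝ => w.2.2) ⁻¹' T)).indicator (fun _ => (1:ℝ))) x ∂PP)
      = (PP (((fun w : ℝ×ℝ×ℝ => w.1) ⁻¹' S) ∩ ((fun w : ℝ×ℝ×ℝ => w.2.2) ⁻¹' T))).toReal :=
    integral_indicator_one (hAm.inter hBm)
  have e2' : (∫ x, (((fun w : ℝ×ℝ×ℝ => w.1) ⁻¹' S).indicator (fun _ => (1:ℝ))) x ∂PP)
      = (PP ((fun w : ℝ×ℝ×ℝ => w.1) ⁻¹' S)).toReal := integral_indicator_one hAm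
  have e3' : (∫ x, (((fun w : ℝ×ℝ×ℝ => w.2.2) ⁻¹' T).indicator (fun _ => (1:ℝ))) x ∂PP)
      = (PP ((fun w : ℝ×ℝ×ℝ => w.2.2) ⁻¹' T)).toReal := integral_indicator_one hBm
  rw [e1'] at h1
  rw [e2'] at h2
  rw [e3'] at h3
  filter_upwards [h1, h2, h3] with ω e1 e2 e3
  rw [e1, e2, e3]
  have key : PP (((fun w : ℝ×ℝ×ℝ => w.1) ⁻¹' S) ∩ ((fun w : ℝ×ℝ×ℝ => w.2.2) ⁻¹' T))
      = PP ((fun w : ℝ×ℝ×ℝ => w.1) ⁻¹' S) * PP ((fun w : ℝ×ℝ×ℝ => w.2.2) ⁻¹' T) := by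
    simp only [PP, Measure.smul_apply, Measure.add_apply, Measure.dirac_apply,
      Set.indicator_apply, Set.mem_inter_iff, Set.mem_preimage, smul_eq_mul]
    by_cases h0S : (0:ℝ) ∈ S <;> by_cases h1S : (1:ℝ) ∈ S <;>
      by_cases h0T : (0:ℝ) ∈ T <;> by_cases h1T : (1:ℝ) ∈ T <;>
      · simp [h0S, h1S, h0T, h1T]
        try ring_nf
        try (
          refine (ENNReal.toReal_eq_toReal_iff'
            (ENNReal.mul_ne_top (by norm_num) (by norm_num))
            (ENNReal.mul_ne_top (ENNReal.pow_ne_top (by norm_num)) (by norm_num))).mp ?_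
          simp [ENNReal.toReal_mul, ENNReal.toReal_inv, ENNReal.toReal_pow]
          norm_num)
        try (
          refine (ENNReal.toReal_eq_toReal_iff' (by norm_num)
            (ENNReal.mul_ne_top (ENNReal.pow_ne_top (by norm_num)) (by norm_num))).mp ?_
          simp [ENNReal.toReal_mul, ENNReal.toReal_inv, ENNReal.toReal_pow]
          norm_num)
  rw [key, ENNReal.toReal_mul]

lemma h44 : (4⁻¹ : ℝ≥0∞) + 4⁻¹ = 2⁻¹ := by
  have h4 : (4:ℝ≥0∞)⁻¹ = 2⁻¹ * 2⁻¹ := by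
    rw [← ENNReal.mul_inv (by norm_num) (by norm_num)]; norm_num
  have h2 : (2⁻¹ : ℝ≥0∞) + 2⁻¹ = 1 := by
    rw [← two_mul]; exact ENNReal.mul_inv_cancel (by norm_num) (by norm_num)
  rw [h4, ← mul_add, h2, mul_one]

lemma quarter_split {α : Type*} [MeasurableSpace α] (μ ν : Measure α) :
    (4⁻¹:ℝ≥0∞) • (μ + μ + ν + ν) = (2⁻¹:ℝ≥0∞) • μ + (2⁻¹:ℝ≥0∞) • ν := by
  rw [smul_add, smul_add, smul_add, ← h44, add_smul, add_smul]
  abel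

lemma quarter_split' {α : Type*} [MeasurableSpace α] (μ ν : Measure α) :
    (4⁻¹:ℝ≥0∞) • (μ + ν + μ + ν) = (2⁻¹:ℝ≥0∞) • μ + (2⁻¹:ℝ≥0∞) • ν := by
  rw [show μ + ν + μ + ν = μ + μ + ν + ν by abel]
  exact quarter_split μ ν

lemma tpos (n : ℕ) : (0:ℝ) < ((n:ℝ)+1)⁻¹ := by positivity

-- cost at equal points is 0
lemma lq2_zero (q p : ℝ) (hq : 1 ≤ q) (hp : 1 ≤ p) (x : ℝ × ℝ) :
    ENNReal.ofReal (lqDist2 q x x ^ p) = 0 := by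
  have hq0 : q ≠ 0 := by linarith
  have hp0 : p ≠ 0 := by linarith
  have h1 : lqDist2 q x x = 0 := by
    simp [lqDist2, Real.zero_rpow hq0, Real.zero_rpow (inv_ne_zero hq0), one_div]
  rw [h1, Real.zero_rpow hp0]
  simp

lemma lq2_t (q : ℝ) (hq : 1 ≤ q) {t : ℝ} (ht : 0 < t) :
    lqDist2 q (1, t) (1, 0) = t := by
  have hq0 : q ≠ 0 := by linarith
  simp only [lqDist2]
  rw [show (1:ℝ) - 1 = 0 by ring, abs_zero, Real.zero_rpow hq0, sub_zero,
    abs_of_pos ht, zero_add, ← Real.rpow_mul ht.le, mul_one_div_cancel hq0, Real.rpow_one]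

example (q : ℝ) (hq : q ≠ 0) {t : ℝ} (ht : 0 ≤ t) : (t ^ q) ^ (1/q) = t := by
  rw [← Real.rpow_mul ht, mul_one_div_cancel hq, Real.rpow_one]

lemma f12_meas : Measurable (fun w : ℝ×ℝ×ℝ => (w.1, w.2.1)) :=
  measurable_fst.prodMk (measurable_fst.comp measurable_snd)

lemma f23_meas : Measurable (fun w : ℝ×ℝ×ℝ => w.2) := measurable_snd

lemma wass_le12 (p q : ℝ) (hp : 1 ≤ p) (hq : 1 ≤ q) (n : ℕ) :
    wassersteinDist (lqDist2 q) p ((PPn n).map fun w => (w.1, w.2.1))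
      (PP.map fun w => (w.1, w.2.1)) ≤ ENNReal.ofReal (((n:ℝ)+1)⁻¹) := by
  have hp0 : p ≠ 0 := by linarith
  have hprob : IsProbabilityMeasure ((4⁻¹:ℝ≥0∞) •
      (Measure.dirac (((0:ℝ),(0:ℝ)),((0:ℝ),(0:ℝ))) + Measure.dirac (((0:ℝ),(0:ℝ)),((0:ℝ),(0:ℝ)))
      + Measure.dirac (((1:ℝ),((n:ℝ)+1)⁻¹),((1:ℝ),(0:ℝ)))
      + Measure.dirac (((1:ℝ),((n:ℝ)+1)⁻¹),((1:ℝ),(0:ℝ))))) := by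
    constructor
    simp
    have : (4⁻¹ : ℝ≥0∞) + 4⁻¹ + 4⁻¹ + 4⁻¹ = 4 * 4⁻¹ := by ring
    rw [this]
    exact ENNReal.mul_inv_cancel (by norm_num) (by norm_num)
  have hfst : ((4⁻¹:ℝ≥0∞) •
      (Measure.dirac (((0:ℝ),(0:ℝ)),((0:ℝ),(0:ℝ))) + Measure.dirac (((0:ℝ),(0:ℝ)),((0:ℝ),(0:ℝ)))
      + Measure.dirac (((1:ℝ),((n:ℝ)+1)⁻¹),((1:ℝ),(0:ℝ)))
      + Measure.dirac (((1:ℝ),((n:ℝ)+1)⁻¹),((1:ℝ),(0:ℝ))))).map Prod.fst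
      = (PPn n).map (fun w => (w.1, w.2.1)) := by
    have e1 : ((4⁻¹:ℝ≥0∞) •
      (Measure.dirac (((0:ℝ),(0:ℝ)),((0:ℝ),(0:ℝ))) + Measure.dirac (((0:ℝ),(0:ℝ)),((0:ℝ),(0:ℝ)))
      + Measure.dirac (((1:ℝ),((n:ℝ)+1)⁻¹),((1:ℝ),(0:ℝ)))
      + Measure.dirac (((1:ℝ),((n:ℝ)+1)⁻¹),((1:ℝ),(0:ℝ))))).map Prod.fst
        = (4⁻¹:ℝ≥0∞) • (Measure.dirac ((0:ℝ),(0:ℝ)) + Measure.dirac ((0:ℝ),(0:ℝ))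
          + Measure.dirac ((1:ℝ),((n:ℝ)+1)⁻¹) + Measure.dirac ((1:ℝ),((n:ℝ)+1)⁻¹)) := by
      simp [Measure.map_smul, Measure.map_add _ _ measurable_fst,
        Measure.map_dirac' measurable_fst]
    have e2 : (PPn n).map (fun w => (w.1, w.2.1))
        = (2⁻¹:ℝ≥0∞) • Measure.dirac ((0:ℝ),(0:ℝ))
          + (2⁻¹:ℝ≥0∞) • Measure.dirac ((1:ℝ),((n:ℝ)+1)⁻¹) := by
      simp [PPn, Measure.map_add _ _ f12_meas, Measure.map_smul,
        Measure.map_dirac' f12_meas, pa, pb]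
    rw [e1, e2, quarter_split]
  have hsnd : ((4⁻¹:ℝ≥0∞) •
      (Measure.dirac (((0:ℝ),(0:ℝ)),((0:ℝ),(0:ℝ))) + Measure.dirac (((0:ℝ),(0:ℝ)),((0:ℝ),(0:ℝ)))
      + Measure.dirac (((1:ℝ),((n:ℝ)+1)⁻¹),((1:ℝ),(0:ℝ)))
      + Measure.dirac (((1:ℝ),((n:ℝ)+1)⁻¹),((1:ℝ),(0:ℝ))))).map Prod.snd
      = PP.map (fun w => (w.1, w.2.1)) := by
    have e1 : ((4⁻¹:ℝ≥0∞) •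
      (Measure.dirac (((0:ℝ),(0:ℝ)),((0:ℝ),(0:ℝ))) + Measure.dirac (((0:ℝ),(0:ℝ)),((0:ℝ),(0:ℝ)))
      + Measure.dirac (((1:ℝ),((n:ℝ)+1)⁻¹),((1:ℝ),(0:ℝ)))
      + Measure.dirac (((1:ℝ),((n:ℝ)+1)⁻¹),((1:ℝ),(0:ℝ))))).map Prod.snd
        = (4⁻¹:ℝ≥0∞) • (Measure.dirac ((0:ℝ),(0:ℝ)) + Measure.dirac ((0:ℝ),(0:ℝ))
          + Measure.dirac ((1:ℝ),(0:ℝ)) + Measure.dirac ((1:ℝ),(0:ℝ))) := by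
      simp [Measure.map_smul, Measure.map_add _ _ measurable_snd,
        Measure.map_dirac' measurable_snd]
    have e2 : PP.map (fun w => (w.1, w.2.1))
        = (4⁻¹:ℝ≥0∞) • (Measure.dirac ((0:ℝ),(0:ℝ)) + Measure.dirac ((0:ℝ),(0:ℝ))
          + Measure.dirac ((1:ℝ),(0:ℝ)) + Measure.dirac ((1:ℝ),(0:ℝ))) := by
      simp [PP, Measure.map_add _ _ f12_meas, Measure.map_smul,
        Measure.map_dirac' f12_meas]
    rw [e1, e2]
  have hle : wassersteinDist (lqDist2 q) p ((PPn n).map fun w => (w.1, w.2.1))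
      (PP.map fun w => (w.1, w.2.1))
      ≤ (∫⁻ z, ENNReal.ofReal (lqDist2 q z.1 z.2 ^ p) ∂((4⁻¹:ℝ≥0∞) •
      (Measure.dirac (((0:ℝ),(0:ℝ)),((0:ℝ),(0:ℝ))) + Measure.dirac (((0:ℝ),(0:ℝ)),((0:ℝ),(0:ℝ)))
      + Measure.dirac (((1:ℝ),((n:ℝ)+1)⁻¹),((1:ℝ),(0:ℝ)))
      + Measure.dirac (((1:ℝ),((n:ℝ)+1)⁻¹),((1:ℝ),(0:ℝ)))))) ^ (1/p) :=
    iInf_le_of_le _ (iInf_le_of_le hprob (iInf_le_of_le ⟨hfst, hsnd⟩ le_rfl))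
  refine hle.trans ?_
  have hint : (∫⁻ z, ENNReal.ofReal (lqDist2 q z.1 z.2 ^ p) ∂((4⁻¹:ℝ≥0∞) •
      (Measure.dirac (((0:ℝ),(0:ℝ)),((0:ℝ),(0:ℝ))) + Measure.dirac (((0:ℝ),(0:ℝ)),((0:ℝ),(0:ℝ)))
      + Measure.dirac (((1:ℝ),((n:ℝ)+1)⁻¹),((1:ℝ),(0:ℝ)))
      + Measure.dirac (((1:ℝ),((n:ℝ)+1)⁻¹),((1:ℝ),(0:ℝ))))))
      ≤ ENNReal.ofReal ((((n:ℝ)+1)⁻¹) ^ p) := by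
    rw [lintegral_smul_measure, lintegral_add_measure, lintegral_add_measure,
      lintegral_add_measure, lintegral_dirac, lintegral_dirac]
    show (4⁻¹:ℝ≥0∞) * (ENNReal.ofReal (lqDist2 q ((0:ℝ),(0:ℝ)) ((0:ℝ),(0:ℝ)) ^ p)
      + ENNReal.ofReal (lqDist2 q ((0:ℝ),(0:ℝ)) ((0:ℝ),(0:ℝ)) ^ p)
      + ENNReal.ofReal (lqDist2 q ((1:ℝ),((n:ℝ)+1)⁻¹) ((1:ℝ),(0:ℝ)) ^ p)
      + ENNReal.ofReal (lqDist2 q ((1:ℝ),((n:ℝ)+1)⁻¹) ((1:ℝ),(0:ℝ)) ^ p)) ≤ _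
    rw [lq2_zero q p hq hp, lq2_t q hq (tpos n)]
    set x := ENNReal.ofReal ((((n:ℝ)+1)⁻¹) ^ p) with hx
    calc (4⁻¹:ℝ≥0∞) * (0 + 0 + x + x) = 4⁻¹ * 2 * x := by ring
    _ ≤ 4⁻¹ * 4 * x := mul_le_mul_left (mul_le_mul_right (by norm_num) _) x
    _ = x := by rw [ENNReal.inv_mul_cancel (by norm_num) (by norm_num), one_mul]
  calc _ ≤ (ENNReal.ofReal ((((n:ℝ)+1)⁻¹) ^ p)) ^ (1/p) :=
        ENNReal.rpow_le_rpow hint (by positivity)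
  _ = ENNReal.ofReal (((((n:ℝ)+1)⁻¹) ^ p) ^ (1/p)) :=
        ENNReal.ofReal_rpow_of_nonneg (by positivity) (by positivity)
  _ = ENNReal.ofReal (((n:ℝ)+1)⁻¹) := by
        rw [← Real.rpow_mul (tpos n).le, mul_one_div_cancel hp0, Real.rpow_one]

lemma lq2_t' (q : ℝ) (hq : 1 ≤ q) {t : ℝ} (ht : 0 < t) :
    lqDist2 q (t, 1) (0, 1) = t := by
  have hq0 : q ≠ 0 := by linarith
  simp only [lqDist2]
  rw [show (1:ℝ) - 1 = 0 by ring, abs_zero, Real.zero_rpow hq0, sub_zero,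
    abs_of_pos ht, add_zero, ← Real.rpow_mul ht.le, mul_one_div_cancel hq0, Real.rpow_one]

lemma wass_le23 (p q : ℝ) (hp : 1 ≤ p) (hq : 1 ≤ q) (n : ℕ) :
    wassersteinDist (lqDist2 q) p ((PPn n).map fun w => w.2)
      (PP.map fun w => w.2) ≤ ENNReal.ofReal (((n:ℝ)+1)⁻¹) := by
  have hp0 : p ≠ 0 := by linarith
  set γ : Measure ((ℝ×ℝ)×(ℝ×ℝ)) := (4⁻¹:ℝ≥0∞) •
      (Measure.dirac (((0:ℝ),(0:ℝ)),((0:ℝ),(0:ℝ)))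
      + Measure.dirac (((((n:ℝ)+1)⁻¹),(1:ℝ)),((0:ℝ),(1:ℝ)))
      + Measure.dirac (((0:ℝ),(0:ℝ)),((0:ℝ),(0:ℝ)))
      + Measure.dirac (((((n:ℝ)+1)⁻¹),(1:ℝ)),((0:ℝ),(1:ℝ)))) with hγ
  have hprob : IsProbabilityMeasure γ := by
    constructor
    simp [hγ]
    have : (4⁻¹ : ℝ≥0∞) + 4⁻¹ + 4⁻¹ + 4⁻¹ = 4 * 4⁻¹ := by ring
    rw [this]
    exact ENNReal.mul_inv_cancel (by norm_num) (by norm_num)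
  have hfst : γ.map Prod.fst = (PPn n).map (fun w => w.2) := by
    have e1 : γ.map Prod.fst
        = (4⁻¹:ℝ≥0∞) • (Measure.dirac ((0:ℝ),(0:ℝ)) + Measure.dirac ((((n:ℝ)+1)⁻¹),(1:ℝ))
          + Measure.dirac ((0:ℝ),(0:ℝ)) + Measure.dirac ((((n:ℝ)+1)⁻¹),(1:ℝ))) := by
      simp [hγ, Measure.map_smul, Measure.map_add _ _ measurable_fst,
        Measure.map_dirac' measurable_fst]
    have e2 : (PPn n).map (fun w => w.2)
        = (2⁻¹:ℝ≥0∞) • Measure.dirac ((0:ℝ),(0:ℝ))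
          + (2⁻¹:ℝ≥0∞) • Measure.dirac ((((n:ℝ)+1)⁻¹),(1:ℝ)) := by
      simp [PPn, Measure.map_add _ _ f23_meas, Measure.map_smul,
        Measure.map_dirac' f23_meas, pa, pb]
    rw [e1, e2, quarter_split']
  have hsnd : γ.map Prod.snd = PP.map (fun w => w.2) := by
    have e1 : γ.map Prod.snd
        = (4⁻¹:ℝ≥0∞) • (Measure.dirac ((0:ℝ),(0:ℝ)) + Measure.dirac ((0:ℝ),(1:ℝ))
          + Measure.dirac ((0:ℝ),(0:ℝ)) + Measure.dirac ((0:ℝ),(1:ℝ))) := by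
      simp [hγ, Measure.map_smul, Measure.map_add _ _ measurable_snd,
        Measure.map_dirac' measurable_snd]
    have e2 : PP.map (fun w => w.2)
        = (4⁻¹:ℝ≥0∞) • (Measure.dirac ((0:ℝ),(0:ℝ)) + Measure.dirac ((0:ℝ),(1:ℝ))
          + Measure.dirac ((0:ℝ),(0:ℝ)) + Measure.dirac ((0:ℝ),(1:ℝ))) := by
      simp [PP, Measure.map_add _ _ f23_meas, Measure.map_smul,
        Measure.map_dirac' f23_meas]
    rw [e1, e2]
  have hle : wassersteinDist (lqDist2 q) p ((PPn n).map fun w => w.2)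
      (PP.map fun w => w.2)
      ≤ (∫⁻ z, ENNReal.ofReal (lqDist2 q z.1 z.2 ^ p) ∂γ) ^ (1/p) :=
    iInf_le_of_le γ (iInf_le_of_le hprob (iInf_le_of_le ⟨hfst, hsnd⟩ le_rfl))
  refine hle.trans ?_
  have hint : (∫⁻ z, ENNReal.ofReal (lqDist2 q z.1 z.2 ^ p) ∂γ)
      ≤ ENNReal.ofReal ((((n:ℝ)+1)⁻¹) ^ p) := by
    rw [hγ, lintegral_smul_measure, lintegral_add_measure, lintegral_add_measure,
      lintegral_add_measure, lintegral_dirac, lintegral_dirac]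
    show (4⁻¹:ℝ≥0∞) * (ENNReal.ofReal (lqDist2 q ((0:ℝ),(0:ℝ)) ((0:ℝ),(0:ℝ)) ^ p)
      + ENNReal.ofReal (lqDist2 q ((((n:ℝ)+1)⁻¹),(1:ℝ)) ((0:ℝ),(1:ℝ)) ^ p)
      + ENNReal.ofReal (lqDist2 q ((0:ℝ),(0:ℝ)) ((0:ℝ),(0:ℝ)) ^ p)
      + ENNReal.ofReal (lqDist2 q ((((n:ℝ)+1)⁻¹),(1:ℝ)) ((0:ℝ),(1:ℝ)) ^ p)) ≤ _
    rw [lq2_zero q p hq hp, lq2_t' q hq (tpos n)]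
    set x := ENNReal.ofReal ((((n:ℝ)+1)⁻¹) ^ p) with hx
    calc (4⁻¹:ℝ≥0∞) * (0 + x + 0 + x) = 4⁻¹ * 2 * x := by ring
    _ ≤ 4⁻¹ * 4 * x := mul_le_mul_left (mul_le_mul_right (by norm_num) _) x
    _ = x := by rw [ENNReal.inv_mul_cancel (by norm_num) (by norm_num), one_mul]
  calc _ ≤ (ENNReal.ofReal ((((n:ℝ)+1)⁻¹) ^ p)) ^ (1/p) :=
        ENNReal.rpow_le_rpow hint (by positivity)
  _ = ENNReal.ofReal (((((n:ℝ)+1)⁻¹) ^ p) ^ (1/p)) :=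
        ENNReal.ofReal_rpow_of_nonneg (by positivity) (by positivity)
  _ = ENNReal.ofReal (((n:ℝ)+1)⁻¹) := by
        rw [← Real.rpow_mul (tpos n).le, mul_one_div_cancel hp0, Real.rpow_one]

lemma pa_ne_pb (n : ℕ) : pa ≠ pb n := by
  simp only [pa, pb, ne_eq, Prod.mk.injEq]
  intro h
  exact absurd h.1 (by norm_num)

lemma one_le_d3 (q : ℝ) (hq : 1 ≤ q) (n : ℕ) (y : ℝ×ℝ×ℝ)
    (hy : y = (0,0,0) ∨ y = (0,0,1) ∨ y = (1,0,0)) : 1 ≤ lqDist3 q (pb n) y := by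
  have hq0 : q ≠ 0 := by linarith
  have ht : (0:ℝ) ≤ |((n:ℝ)+1)⁻¹ - 0| ^ q := Real.rpow_nonneg (abs_nonneg _) q
  rcases hy with rfl | rfl | rfl <;>
  · refine Real.one_le_rpow ?_ (by positivity)
    simp only [lqDist3, pb]
    rw [show |(1:ℝ) - 0| = 1 by norm_num] <;> try rw [show |(1:ℝ) - 1| = 0 by norm_num]
    try rw [show |(1:ℝ) - 1| = 0 by norm_num]
    try rw [Real.zero_rpow hq0]
    rw [Real.one_rpow]
    try rw [Real.one_rpow]
    linarith

lemma wass_lower (p q : ℝ) (hp : 1 ≤ p) (hq : 1 ≤ q) (n : ℕ) :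
    (4⁻¹:ℝ≥0∞) ≤ wassersteinDist (lqDist3 q) p (PPn n) PP := by
  refine le_iInf fun π => le_iInf fun hπ => le_iInf fun hcpl => ?_
  obtain ⟨hf, hs⟩ := hcpl
  set c : ℝ×ℝ×ℝ := (1,0,1) with hc
  set atoms : Set (ℝ×ℝ×ℝ) := {(0,0,0),(0,0,1),(1,0,0),(1,0,1)} with hatoms
  have hatoms_meas : MeasurableSet atoms := by
    rw [hatoms]
    exact (((measurableSet_singleton _).insert _).insert _).insert _
  set K : Set ((ℝ×ℝ×ℝ)×(ℝ×ℝ×ℝ)) :=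
    (Prod.fst ⁻¹' {pb n}) ∩ (Prod.snd ⁻¹' {c})ᶜ ∩ (Prod.snd ⁻¹' atoms) with hK
  have hKmeas : MeasurableSet K := by
    refine MeasurableSet.inter (MeasurableSet.inter ?_ ?_) ?_
    · exact measurable_fst (measurableSet_singleton _)
    · exact (measurable_snd (measurableSet_singleton _)).compl
    · exact measurable_snd hatoms_meas
  have hπF : π (Prod.fst ⁻¹' {pb n}) = 2⁻¹ := by
    rw [← Measure.map_apply measurable_fst (measurableSet_singleton _), hf]
    simp [PPn, Measure.dirac_apply, Set.indicator_apply, pa_ne_pb n]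
  have hπG : π (Prod.snd ⁻¹' {c}) = 4⁻¹ := by
    rw [← Measure.map_apply measurable_snd (measurableSet_singleton _), hs]
    simp [PP, hc, Measure.dirac_apply, Set.indicator_apply, Prod.ext_iff]
  have hπN : π (Prod.snd ⁻¹' atomsᶜ) = 0 := by
    rw [← Measure.map_apply measurable_snd hatoms_meas.compl, hs]
    simp [PP, hatoms, Measure.dirac_apply, Set.indicator_apply]
  have hKlow : (4⁻¹:ℝ≥0∞) ≤ π K := by
    have hsub : Prod.fst ⁻¹' {pb n} ⊆ K ∪ (Prod.snd ⁻¹' {c}) ∪ (Prod.snd ⁻¹' atomsᶜ) := by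
      intro z hz
      by_cases hzc : z.2 ∈ atoms
      · by_cases hzc2 : z.2 = c
        · exact Or.inl (Or.inr hzc2)
        · exact Or.inl (Or.inl ⟨⟨hz, hzc2⟩, hzc⟩)
      · exact Or.inr hzc
    have hle2 : π (Prod.fst ⁻¹' {pb n}) ≤ π K + π (Prod.snd ⁻¹' {c}) + π (Prod.snd ⁻¹' atomsᶜ) :=
      le_trans (measure_mono hsub) (le_trans (measure_union_le _ _)
        (add_le_add_left (measure_union_le _ _) _))
    rw [hπF, hπG, hπN, add_zero] at hle2
    have h12 : (2⁻¹:ℝ≥0∞) = 4⁻¹ + 4⁻¹ := h44.symm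
    rw [h12] at hle2
    exact (ENNReal.add_le_add_iff_right (by norm_num)).mp hle2
  have hpt : ∀ z : (ℝ×ℝ×ℝ)×(ℝ×ℝ×ℝ), K.indicator (fun _ => (1:ℝ≥0∞)) z
      ≤ ENNReal.ofReal (lqDist3 q z.1 z.2 ^ p) := by
    intro z
    by_cases hz : z ∈ K
    · rw [Set.indicator_of_mem hz]
      obtain ⟨⟨hz1, hz2⟩, hz3⟩ := hz
      have hz1' : z.1 = pb n := hz1
      have hy : z.2 = (0,0,0) ∨ z.2 = (0,0,1) ∨ z.2 = (1,0,0) := by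
        rcases hz3 with h | h | h | h
        · exact Or.inl h
        · exact Or.inr (Or.inl h)
        · exact Or.inr (Or.inr h)
        · exact absurd h hz2
      have hd := one_le_d3 q hq n z.2 hy
      rw [hz1']
      rw [ENNReal.one_le_ofReal]  -- maybe name wrong
      exact Real.one_le_rpow hd (by linarith)
    · rw [Set.indicator_of_notMem hz]
      exact zero_le
  have hint : π K ≤ ∫⁻ z, ENNReal.ofReal (lqDist3 q z.1 z.2 ^ p) ∂π := by
    rw [← lintegral_indicator_one hKmeas]
    exact lintegral_mono hpt
  calc (4⁻¹:ℝ≥0∞) = (4⁻¹:ℝ≥0∞) ^ (1:ℝ) := (ENNReal.rpow_one _).symm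
  _ ≤ (4⁻¹:ℝ≥0∞) ^ (1/p) := by
      refine ENNReal.rpow_le_rpow_of_exponent_ge (by simp) ?_
      rw [div_le_one (by linarith)]; linarith
  _ ≤ (π K) ^ (1/p) := ENNReal.rpow_le_rpow hKlow (by positivity)
  _ ≤ (∫⁻ z, ENNReal.ofReal (lqDist3 q z.1 z.2 ^ p) ∂π) ^ (1/p) :=
      ENNReal.rpow_le_rpow hint (by positivity)

lemma PPn_cube (n : ℕ) :
    PPn n (Set.Icc 0 1 ×ˢ Set.Icc 0 1 ×ˢ Set.Icc 0 1) = 1 := by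
  have ha : pa ∈ (Set.Icc (0:ℝ) 1 ×ˢ Set.Icc (0:ℝ) 1 ×ˢ Set.Icc (0:ℝ) 1) := by
    refine ⟨?_, ?_, ?_⟩ <;> simp [pa]
  have hb : pb n ∈ (Set.Icc (0:ℝ) 1 ×ˢ Set.Icc (0:ℝ) 1 ×ˢ Set.Icc (0:ℝ) 1) := by
    refine ⟨?_, ?_, ?_⟩ <;> simp [pb]
    constructor
    · positivity
    · rw [inv_le_one_iff₀]
      right
      have : (0:ℝ) ≤ n := Nat.cast_nonneg n
      linarith
  simp only [PPn, Measure.coe_add, Measure.coe_smul, Pi.add_apply, Pi.smul_apply,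
    Measure.dirac_apply, Set.indicator_of_mem ha, Set.indicator_of_mem hb, smul_eq_mul,
    Pi.one_apply, mul_one]
  rw [← two_mul]
  exact ENNReal.mul_inv_cancel (by norm_num) (by norm_num)

lemma PP_cube : PP (Set.Icc 0 1 ×ˢ Set.Icc 0 1 ×ˢ Set.Icc 0 1) = 1 := by
  have h1 : ((0:ℝ),(0:ℝ),(0:ℝ)) ∈ (Set.Icc (0:ℝ) 1 ×ˢ Set.Icc (0:ℝ) 1 ×ˢ Set.Icc (0:ℝ) 1) := by
    refine ⟨?_, ?_, ?_⟩ <;> simp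
  have h2 : ((0:ℝ),(0:ℝ),(1:ℝ)) ∈ (Set.Icc (0:ℝ) 1 ×ˢ Set.Icc (0:ℝ) 1 ×ˢ Set.Icc (0:ℝ) 1) := by
    refine ⟨?_, ?_, ?_⟩ <;> simp
  have h3 : ((1:ℝ),(0:ℝ),(0:ℝ)) ∈ (Set.Icc (0:ℝ) 1 ×ˢ Set.Icc (0:ℝ) 1 ×ˢ Set.Icc (0:ℝ) 1) := by
    refine ⟨?_, ?_, ?_⟩ <;> simp
  have h4 : ((1:ℝ),(0:ℝ),(1:ℝ)) ∈ (Set.Icc (0:ℝ) 1 ×ˢ Set.Icc (0:ℝ) 1 ×ˢ Set.Icc (0:ℝ) 1) := by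
    refine ⟨?_, ?_, ?_⟩ <;> simp
  simp only [PP, Measure.coe_smul, Pi.smul_apply, Measure.coe_add, Pi.add_apply,
    Measure.dirac_apply, Set.indicator_of_mem h1, Set.indicator_of_mem h2,
    Set.indicator_of_mem h3, Set.indicator_of_mem h4, smul_eq_mul, Pi.one_apply]
  have : (1:ℝ≥0∞) + 1 + 1 + 1 = 4 := by norm_num
  rw [this]
  exact ENNReal.inv_mul_cancel (by norm_num) (by norm_num)

lemma conv12 (p q : ℝ) (hp : 1 ≤ p) (hq : 1 ≤ q) :
    Tendsto (fun n =>
        wassersteinDist (lqDist2 q) p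
          ((PPn n).map fun w => (w.1, w.2.1)) (PP.map fun w => (w.1, w.2.1)))
      atTop (𝓝 0) := by
  have hub : Tendsto (fun n : ℕ => ENNReal.ofReal (((n:ℝ)+1)⁻¹)) atTop (𝓝 0) := by
    have h0 : Tendsto (fun n : ℕ => ((n:ℝ)+1)⁻¹) atTop (𝓝 0) := by
      simpa [one_div] using tendsto_one_div_add_atTop_nhds_zero_nat (𝕜 := ℝ)
    have := ENNReal.tendsto_ofReal h0
    simpa using this
  exact tendsto_of_tendsto_of_tendsto_of_le_of_le tendsto_const_nhds hub
    (fun n => zero_le) (fun n => wass_le12 p q hp hq n)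

lemma conv23 (p q : ℝ) (hp : 1 ≤ p) (hq : 1 ≤ q) :
    Tendsto (fun n =>
        wassersteinDist (lqDist2 q) p
          ((PPn n).map fun w => w.2) (PP.map fun w => w.2))
      atTop (𝓝 0) := by
  have hub : Tendsto (fun n : ℕ => ENNReal.ofReal (((n:ℝ)+1)⁻¹)) atTop (𝓝 0) := by
    have h0 : Tendsto (fun n : ℕ => ((n:ℝ)+1)⁻¹) atTop (𝓝 0) := by
      simpa [one_div] using tendsto_one_div_add_atTop_nhds_zero_nat (𝕜 := ℝ)
    have := ENNReal.tendsto_ofReal h0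
    simpa using this
  exact tendsto_of_tendsto_of_tendsto_of_le_of_le tendsto_const_nhds hub
    (fun n => zero_le) (fun n => wass_le23 p q hp hq n)

lemma not_conv (p q : ℝ) (hp : 1 ≤ p) (hq : 1 ≤ q) :
    ¬ Tendsto (fun n => wassersteinDist (lqDist3 q) p (PPn n) PP) atTop (𝓝 0) := by
  intro h
  have h2 : ∀ᶠ n in atTop, wassersteinDist (lqDist3 q) p (PPn n) PP < 4⁻¹ :=
    h.eventually_lt_const (by norm_num)
  obtain ⟨n, hn⟩ := h2.exists
  exact absurd (wass_lower p q hp hq n) (not_le.mpr hn)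

/-- **Section S6 counterexample.** For every `p ≥ 1` (and any `l_q` norm, `q ≥ 1`) there are
probability measures `Pₙ`, `P` supported on `[0,1]³ ⊂ ℝ³`, each the law of a Markov chain of
length 3, such that the `(1,2)`- and `(2,3)`-marginals of `Pₙ` converge to those of `P` in the
Wasserstein-`p` metric, yet `Pₙ` does not converge to `P` in the Wasserstein-`p` metric. -/
theorem stmt_10 (p q : ℝ) (hp : 1 ≤ p) (hq : 1 ≤ q) :
    ∃ (Pn : ℕ → Measure (ℝ × ℝ × ℝ)) (P : Measure (ℝ × ℝ × ℝ)),
      (∀ n, IsProbabilityMeasure (Pn n)) ∧ IsProbabilityMeasure P ∧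
      (∀ n, Pn n (Set.Icc 0 1 ×ˢ Set.Icc 0 1 ×ˢ Set.Icc 0 1) = 1) ∧
      P (Set.Icc 0 1 ×ˢ Set.Icc 0 1 ×ˢ Set.Icc 0 1) = 1 ∧
      (∀ n, IsMarkovLaw3 (Pn n)) ∧ IsMarkovLaw3 P ∧
      Tendsto (fun n =>
          wassersteinDist (lqDist2 q) p
            ((Pn n).map fun w => (w.1, w.2.1)) (P.map fun w => (w.1, w.2.1)))
        atTop (𝓝 0) ∧
      Tendsto (fun n =>
          wassersteinDist (lqDist2 q) p
            ((Pn n).map fun w => w.2) (P.map fun w => w.2))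
        atTop (𝓝 0) ∧
      ¬ Tendsto (fun n => wassersteinDist (lqDist3 q) p (Pn n) P) atTop (𝓝 0) := by
  exact ⟨PPn, PP, fun n => inferInstance, inferInstance, PPn_cube, PP_cube,
    markov_PPn, markov_PP, conv12 p q hp hq, conv23 p q hp hq, not_conv p q hp hq⟩
end
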